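/- Let R be a Dedekind domain with fraction field K, A a finite flat commutative R-Hopf algebra, and I_η ⊆ A_K := A ⊗_R K a Hopf ideal. Then I := A ∩ I_η is a Hopf ideal of A; consequently the scheme-theoretic closure of a closed K-subgroup scheme of the generic fiber of a finite flat R-group scheme is a flat closed R-subgroup scheme. -/

import Mathlib

open TensorProduct

/-- A module over a Dedekind domain that embeds into a vector space over the fraction
field is flat. -/
theorem aux_flat_of_inj (R K Q V : Type*) [CommRing R] [IsDomain R] [IsDedekindDomain R]
    [Field K] [Algebra R K] [IsFractionRing R K]
    [AddCommGroup Q] [Module R Q]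
    [AddCommGroup V] [Module K V] [Module R V] [IsScalarTower R K V]
    (f : Q →ₗ[R] V) (hf : Function.Injective f) : Module.Flat R Q := by
  rw [Module.Flat.iff_rTensor_injective']
  intro J
  rcases eq_or_ne J ⊥ with hJ | hJ
  · subst hJ
    haveI : Subsingleton (↥(⊥ : Ideal R)) := by
      constructor; rintro ⟨a, ha⟩ ⟨b, hb⟩
      simp only [Ideal.mem_bot] at ha hb; subst ha; subst hb; rfl
    have hsub : ∀ t : (↥(⊥ : Ideal R)) ⊗[R] Q, t = 0 := by
      intro t
      induction t using TensorProduct.induction_on with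
      | zero => rfl
      | tmul x q => rw [Subsingleton.elim x 0, TensorProduct.zero_tmul]
      | add x y hx hy => rw [hx, hy, add_zero]
    intro a b _; rw [hsub a, hsub b]
  · -- J is invertible
    have h1 : (J : FractionalIdeal (nonZeroDivisors R) K) *
        (J : FractionalIdeal (nonZeroDivisors R) K)⁻¹ = 1 :=
      mul_inv_cancel₀ (FractionalIdeal.coeIdeal_ne_zero.mpr hJ)
    -- a finite dual-basis-like family
    have hrep : ∃ (n : ℕ) (α : Fin n → R) (b : Fin n → K),
        (∀ i, α i ∈ J) ∧ (∀ i, b i ∈ (J : FractionalIdeal (nonZeroDivisors R) K)⁻¹) ∧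
        (∑ i, algebraMap R K (α i) * b i) = 1 := by
      have h1mem : (1 : K) ∈ ((J : FractionalIdeal (nonZeroDivisors R) K) *
          (J : FractionalIdeal (nonZeroDivisors R) K)⁻¹ : FractionalIdeal (nonZeroDivisors R) K) := by
        rw [h1]; exact FractionalIdeal.one_mem_one _
      rw [← FractionalIdeal.mem_coe, FractionalIdeal.coe_mul] at h1mem
      refine Submodule.mul_induction_on h1mem ?_ ?_
      · intro m hm b hb
        rw [FractionalIdeal.mem_coe, FractionalIdeal.mem_coeIdeal] at hm
        obtain ⟨α, hα, rfl⟩ := hm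
        rw [FractionalIdeal.mem_coe] at hb
        exact ⟨1, fun _ => α, fun _ => b, fun _ => hα, fun _ => hb, by simp⟩
      · rintro x y ⟨n₁, α₁, b₁, hα₁, hb₁, hs₁⟩ ⟨n₂, α₂, b₂, hα₂, hb₂, hs₂⟩
        refine ⟨n₁ + n₂, Fin.addCases α₁ α₂, Fin.addCases b₁ b₂, ?_, ?_, ?_⟩
        · intro i; induction i using Fin.addCases with
          | left i => simpa using hα₁ i
          | right i => simpa using hα₂ i
        · intro i; induction i using Fin.addCases with
          | left i => simpa using hb₁ i
          | right i => simpa using hb₂ i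
        · rw [Fin.sum_univ_add]; simp [hs₁, hs₂]
    obtain ⟨n, α, b, hα, hb, hsum⟩ := hrep
    have hginj : Function.Injective (algebraMap R K) := IsFractionRing.injective R K
    have hexists : ∀ (i : Fin n) (x : ↥J), ∃ r : R,
        algebraMap R K r = b i * algebraMap R K (x : R) := by
      intro i x
      have hx : algebraMap R K (x : R) ∈ (J : FractionalIdeal (nonZeroDivisors R) K) :=
        (FractionalIdeal.mem_coeIdeal _).mpr ⟨x, x.2, rfl⟩
      have hmem := FractionalIdeal.mul_mem_mul (hb i) hx
      rw [mul_comm ((J : FractionalIdeal (nonZeroDivisors R) K))⁻¹, h1] at hmem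
      rwa [FractionalIdeal.mem_one_iff] at hmem
    choose g hg using hexists
    have hgadd : ∀ i (x y : ↥J), g i (x + y) = g i x + g i y := by
      intro i x y
      apply hginj
      rw [map_add, hg, hg, hg, Submodule.coe_add, map_add, mul_add]
    have hgsmul : ∀ i (c : R) (x : ↥J), g i (c • x) = c * g i x := by
      intro i c x
      apply hginj
      rw [hg, map_mul, hg, SetLike.val_smul, smul_eq_mul, map_mul]
      ring
    -- the linear maps given by the dual basis
    set glin : Fin n → (↥J →ₗ[R] R) := fun i =>
      { toFun := g i
        map_add' := hgadd i
        map_smul' := fun c x => by simp only [RingHom.id_apply, smul_eq_mul]; exact hgsmul i c x }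
      with hglin
    set ell : Fin n → ((↥J ⊗[R] Q) →ₗ[R] Q) := fun i =>
      TensorProduct.lift ((LinearMap.lsmul R Q).comp (glin i)) with hell
    set αJ : Fin n → ↥J := fun i => ⟨α i, hα i⟩ with hαJ
    -- the maps through which `ell i` factors
    have hLmk : ∀ i : Fin n, ∃ L : (R ⊗[R] Q) →ₗ[R] V,
        ∀ (r : R) (q : Q), L (r ⊗ₜ[R] q) = (b i * algebraMap R K r) • f q := by
      intro i
      refine ⟨TensorProduct.lift (LinearMap.mk₂ R (fun r q => (b i * algebraMap R K r) • f q)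
        ?_ ?_ ?_ ?_), fun r q => ?_⟩
      · intro r₁ r₂ q; simp only [map_add, mul_add, add_smul]
      · intro c r q
        simp only [smul_eq_mul, map_mul]
        rw [← algebraMap_smul K c ((b i * algebraMap R K r) • f q), smul_smul]
        congr 1; ring
      · intro r q₁ q₂; simp only [map_add, smul_add]
      · intro c r q
        haveI : SMulCommClass R K V := IsScalarTower.to_smulCommClass
        simp only [map_smul]
        rw [smul_comm]
      · simp [TensorProduct.lift.tmul]
    choose L hL using hLmk
    have hfactor : ∀ (i : Fin n) (t : ↥J ⊗[R] Q),
        f (ell i t) = L i (LinearMap.rTensor Q (Submodule.subtype J) t) := by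
      intro i t
      induction t using TensorProduct.induction_on with
      | zero => simp
      | tmul x q =>
          rw [LinearMap.rTensor_tmul]
          rw [hL i]
          simp only [hell, TensorProduct.lift.tmul, LinearMap.coe_comp, Function.comp_apply,
            LinearMap.lsmul_apply, Submodule.subtype_apply]
          rw [map_smul, ← hg i x, algebraMap_smul]
          rfl
      | add x y hx hy => simp only [map_add, hx, hy]
    -- decomposition of any tensor
    have hdecomp : ∀ t : ↥J ⊗[R] Q, t = ∑ i, (αJ i) ⊗ₜ[R] (ell i t) := by
      have : (LinearMap.id : (↥J ⊗[R] Q) →ₗ[R] (↥J ⊗[R] Q)) =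
          ∑ i, (TensorProduct.mk R (↥J) Q (αJ i)).comp (ell i) := by
        apply TensorProduct.ext'
        intro x q
        simp only [LinearMap.id_coe, id_eq, LinearMap.sum_apply, LinearMap.coe_comp,
          Function.comp_apply, TensorProduct.mk_apply, hell, TensorProduct.lift.tmul,
          LinearMap.lsmul_apply]
        have hterm : ∀ i : Fin n, (αJ i) ⊗ₜ[R] ((glin i x) • q) = ((glin i x) • αJ i) ⊗ₜ[R] q := by
          intro i
          rw [TensorProduct.tmul_smul, TensorProduct.smul_tmul']
        rw [Finset.sum_congr rfl (fun i _ => hterm i), ← TensorProduct.sum_tmul]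
        congr 1
        apply Subtype.ext
        have hcoe : ((∑ i, (glin i x) • αJ i : ↥J) : R) = ∑ i, (g i x) * (α i) := by
          push_cast [hglin, hαJ]
          rfl
        rw [hcoe]
        apply hginj
        rw [map_sum]
        have : ∀ i ∈ Finset.univ, algebraMap R K (g i x * α i) =
            (algebraMap R K (α i) * b i) * algebraMap R K (x : R) := by
          intro i _
          rw [map_mul, hg]
          ring
        rw [Finset.sum_congr rfl this, ← Finset.sum_mul, hsum, one_mul]
      intro t
      conv_lhs => rw [← LinearMap.id_apply (R := R) t, this]
      simp [LinearMap.sum_apply]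
    -- conclude injectivity
    rw [injective_iff_map_eq_zero]
    intro t ht
    have h0 : ∀ i, ell i t = 0 := by
      intro i
      apply hf
      rw [hfactor i t, ht, map_zero, map_zero]
    rw [hdecomp t]
    simp [h0]

set_option maxHeartbeats 1000000
set_option synthInstance.maxHeartbeats 1000000

set_option maxHeartbeats 4000000 in
set_option synthInstance.maxHeartbeats 1000000 in
theorem aux_comul_mem
    (R K A : Type*) [CommRing R] [IsDomain R] [IsDedekindDomain R]
    [Field K] [Algebra R K] [IsFractionRing R K]
    [CommRing A] [HopfAlgebra R A] [Module.Finite R A] [Module.Flat R A]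
    (Iη : Ideal (K ⊗[R] A))
    (hcomul : ∀ x ∈ Iη,
      (TensorProduct.AlgebraTensorModule.distribBaseChange (R := R) (A := K)
            (N := A) (Q := A)).toLinearMap
          (LinearMap.baseChange K (Coalgebra.comul (R := R) (A := A)) x) ∈
        Submodule.span K {z : (K ⊗[R] A) ⊗[K] (K ⊗[R] A) |
            ∃ u ∈ Iη, ∃ v : K ⊗[R] A, z = u ⊗ₜ[K] v} ⊔
        Submodule.span K {z : (K ⊗[R] A) ⊗[K] (K ⊗[R] A) |
            ∃ v : K ⊗[R] A, ∃ u ∈ Iη, z = v ⊗ₜ[K] u})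
    (a : A)
    (ha : a ∈ Iη.comap (Algebra.TensorProduct.includeRight (R := R) (A := K) (B := A)).toRingHom) :
      Coalgebra.comul (R := R) (A := A) a ∈
        Submodule.span R {z : A ⊗[R] A |
            ∃ u ∈ Iη.comap
                (Algebra.TensorProduct.includeRight (R := R) (A := K) (B := A)).toRingHom,
              ∃ v : A, z = u ⊗ₜ[R] v} ⊔
        Submodule.span R {z : A ⊗[R] A |
            ∃ v : A, ∃ u ∈ Iη.comap
                (Algebra.TensorProduct.includeRight (R := R) (A := K) (B := A)).toRingHom,
              z = v ⊗ₜ[R] u} := by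
  set φ := Algebra.TensorProduct.includeRight (R := R) (A := K) (B := A) with hφ
  set I : Ideal A := Iη.comap φ.toRingHom with hIdef
  have hmemI : ∀ a : A, a ∈ I ↔ (1 : K) ⊗ₜ[R] a ∈ Iη := by
    intro a
    rw [hIdef, Ideal.mem_comap]
    constructor <;> intro h <;> simpa [hφ] using h
  have hginj : Function.Injective (algebraMap R K) := IsFractionRing.injective R K
  set QK := (K ⊗[R] A) ⧸ Iη with hQK
  set πK := Ideal.Quotient.mkₐ K Iη with hπK
  have hzero : ∀ a ∈ I, (((Ideal.Quotient.mkₐ K Iη).restrictScalars R).comp φ) a = 0 := by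
    intro a ha
    have : φ a ∈ Iη := by simpa [hφ] using ((hmemI a).mp ha)
    simpa using Ideal.Quotient.eq_zero_iff_mem.mpr this
  set fbar : (A ⧸ I) →ₐ[R] QK :=
    Ideal.Quotient.liftₐ I (((Ideal.Quotient.mkₐ K Iη).restrictScalars R).comp φ) hzero
    with hfbar
  have hfbar_mk : ∀ a : A, fbar (Ideal.Quotient.mk I a) = Ideal.Quotient.mk Iη (φ a) := by
    intro a
    rw [hfbar, Ideal.Quotient.liftₐ_apply]
    rfl
  have hfbar_inj : Function.Injective fbar := by
    rw [injective_iff_map_eq_zero]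
    intro x hx
    obtain ⟨a, rfl⟩ := Ideal.Quotient.mk_surjective x
    rw [hfbar_mk] at hx
    rw [Ideal.Quotient.eq_zero_iff_mem] at hx ⊢
    rw [hIdef, Ideal.mem_comap]
    exact hx
  have hflatQ : Module.Flat R (A ⧸ I) :=
    aux_flat_of_inj R K (A ⧸ I) QK fbar.toLinearMap hfbar_inj
  set π : A →ₗ[R] A ⧸ I := (Ideal.Quotient.mkₐ R I).toLinearMap with hπdef
  have hπsurj : Function.Surjective π := Ideal.Quotient.mkₐ_surjective R I
  have hπker : LinearMap.ker π = Submodule.restrictScalars R I := by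
    ext x
    simp only [LinearMap.mem_ker, Submodule.restrictScalars_mem, hπdef,
      AlgHom.toLinearMap_apply, Ideal.Quotient.mkₐ_eq_mk]
    exact Ideal.Quotient.eq_zero_iff_mem
  have hexact : Function.Exact ((Submodule.restrictScalars R I).subtype) π := by
    rw [LinearMap.exact_iff, hπker, Submodule.range_subtype]
  have hker := TensorProduct.map_ker hexact hπsurj hexact hπsurj
  -- the canonical map K ⊗ QK → QK
  set μ : K ⊗[R] QK →ₗ[K] QK := LinearMap.liftBaseChange K LinearMap.id with hμdef
  have hμ_tmul : ∀ (k : K) (x : QK), μ (k ⊗ₜ[R] x) = k • x := by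
    intro k x; rw [hμdef, LinearMap.liftBaseChange_tmul, LinearMap.id_apply]
  have hμsect : ∀ t : K ⊗[R] QK, (1 : K) ⊗ₜ[R] (μ t) = t := by
    intro t
    induction t using TensorProduct.induction_on with
    | zero => simp
    | tmul k x =>
      rw [hμ_tmul]
      obtain ⟨r, s, hs, hk⟩ := IsFractionRing.div_surjective (A := R) k
      have hsne : algebraMap R K s ≠ 0 := by
        intro h0
        exact nonZeroDivisors.ne_zero hs (hginj (by rw [h0, map_zero]))
      have hsk : algebraMap R K s * k = algebraMap R K r := by
        rw [← hk]; field_simp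
      have hL : algebraMap R K s • ((1 : K) ⊗ₜ[R] (k • x)) = algebraMap R K r ⊗ₜ[R] x := by
        rw [algebraMap_smul, ← TensorProduct.tmul_smul, ← smul_assoc, Algebra.smul_def,
          hsk, algebraMap_smul, TensorProduct.tmul_smul, TensorProduct.smul_tmul',
          Algebra.smul_def, mul_one]
      have hR : algebraMap R K s • (k ⊗ₜ[R] x) = algebraMap R K r ⊗ₜ[R] x := by
        rw [algebraMap_smul, TensorProduct.smul_tmul', Algebra.smul_def, hsk]
      have h3 := hL.trans hR.symm
      calc (1 : K) ⊗ₜ[R] (k • x)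
          = (algebraMap R K s)⁻¹ • (algebraMap R K s • ((1 : K) ⊗ₜ[R] (k • x))) :=
            (inv_smul_smul₀ hsne _).symm
        _ = (algebraMap R K s)⁻¹ • (algebraMap R K s • (k ⊗ₜ[R] x)) := by rw [h3]
        _ = k ⊗ₜ[R] x := inv_smul_smul₀ hsne _
    | add x y hx hy => rw [map_add, TensorProduct.tmul_add, hx, hy]
  have hμinj : Function.Injective μ := fun t₁ t₂ h => by
    rw [← hμsect t₁, ← hμsect t₂, h]
  -- the induced K-linear injection K ⊗ (A/I) → QK
  haveI hKflat : Module.Flat R K := IsLocalization.flat K (nonZeroDivisors R)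
  set f' : K ⊗[R] (A ⧸ I) →ₗ[K] QK := μ ∘ₗ LinearMap.baseChange K fbar.toLinearMap
    with hf'def
  have hbc_inj : Function.Injective (LinearMap.baseChange K fbar.toLinearMap) := by
    rw [LinearMap.baseChange_eq_ltensor]
    exact Module.Flat.lTensor_preserves_injective_linearMap (M := K)
      fbar.toLinearMap hfbar_inj
  have hf'inj : Function.Injective f' := by
    rw [hf'def, LinearMap.coe_comp]
    exact hμinj.comp hbc_inj
  have hf'_tmul : ∀ (k : K) (q : A ⧸ I), f' (k ⊗ₜ[R] q) = k • fbar q := by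
    intro k q
    rw [hf'def, LinearMap.comp_apply, LinearMap.baseChange_tmul, hμ_tmul]
    rfl
  haveI : Module.Free K QK := Module.Free.of_divisionRing _ _
  haveI := hflatQ
  set e₂ := (TensorProduct.AlgebraTensorModule.cancelBaseChange R K K QK (A ⧸ I)).symm
    with he₂
  set gmap : (A ⧸ I) ⊗[R] (A ⧸ I) →ₗ[R] QK ⊗[K] QK :=
    ((LinearMap.lTensor QK f').restrictScalars R) ∘ₗ
      ((e₂.toLinearMap).restrictScalars R) ∘ₗ
      (TensorProduct.comm R (A ⧸ I) QK).toLinearMap ∘ₗ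
      LinearMap.lTensor (A ⧸ I) fbar.toLinearMap with hgmap
  have hgmap_inj : Function.Injective gmap := by
    rw [hgmap]
    simp only [LinearMap.coe_comp, LinearMap.coe_restrictScalars,
      LinearEquiv.coe_toLinearMap]
    refine Function.Injective.comp ?_ (Function.Injective.comp ?_
      (Function.Injective.comp ?_ ?_))
    · exact Module.Flat.lTensor_preserves_injective_linearMap (M := QK) f' hf'inj
    · exact e₂.injective
    · exact (TensorProduct.comm R (A ⧸ I) QK).injective
    · exact Module.Flat.lTensor_preserves_injective_linearMap (M := (A ⧸ I))
        fbar.toLinearMap hfbar_inj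
  -- the comparison map on the generic fibre
  set Ψ : ((K ⊗[R] A) ⊗[K] (K ⊗[R] A)) →ₗ[K] QK ⊗[K] QK :=
    (TensorProduct.map πK.toLinearMap πK.toLinearMap) ∘ₗ
      (TensorProduct.comm K (K ⊗[R] A) (K ⊗[R] A)).toLinearMap with hΨdef
  have hΨzero : ∀ z ∈ (Submodule.span K {z : (K ⊗[R] A) ⊗[K] (K ⊗[R] A) |
          ∃ u ∈ Iη, ∃ v : K ⊗[R] A, z = u ⊗ₜ[K] v} ⊔
      Submodule.span K {z : (K ⊗[R] A) ⊗[K] (K ⊗[R] A) |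
          ∃ v : K ⊗[R] A, ∃ u ∈ Iη, z = v ⊗ₜ[K] u}), Ψ z = 0 := by
    intro z hz
    refine (sup_le (Submodule.span_le.mpr ?_) (Submodule.span_le.mpr ?_) :
      _ ≤ LinearMap.ker Ψ) hz
    · rintro _ ⟨u, hu, v, rfl⟩
      simp only [SetLike.mem_coe, LinearMap.mem_ker, hΨdef, LinearMap.coe_comp,
        Function.comp_apply, LinearEquiv.coe_toLinearMap, TensorProduct.comm_tmul,
        TensorProduct.map_tmul]
      have : πK.toLinearMap u = 0 := by
        simpa [hπK] using Ideal.Quotient.eq_zero_iff_mem.mpr hu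
      rw [this, TensorProduct.tmul_zero]
    · rintro _ ⟨v, u, hu, rfl⟩
      simp only [SetLike.mem_coe, LinearMap.mem_ker, hΨdef, LinearMap.coe_comp,
        Function.comp_apply, LinearEquiv.coe_toLinearMap, TensorProduct.comm_tmul,
        TensorProduct.map_tmul]
      have : πK.toLinearMap u = 0 := by
        simpa [hπK] using Ideal.Quotient.eq_zero_iff_mem.mpr hu
      rw [this, TensorProduct.zero_tmul]
  -- compatibility of the two routes to QK ⊗ QK
  have hcompat : ∀ t : A ⊗[R] A,
      gmap ((TensorProduct.map π π) t) =
      Ψ ((TensorProduct.AlgebraTensorModule.distribBaseChange (R := R) (A := K)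
          (N := A) (Q := A)).toLinearMap ((1 : K) ⊗ₜ[R] t)) := by
    intro t
    induction t using TensorProduct.induction_on with
    | zero =>
      rw [map_zero, map_zero, TensorProduct.tmul_zero, map_zero, map_zero]
    | tmul x y =>
      have hD : (TensorProduct.AlgebraTensorModule.distribBaseChange (R := R) (A := K)
          (N := A) (Q := A)).toLinearMap ((1 : K) ⊗ₜ[R] (x ⊗ₜ[R] y)) =
          ((1 : K) ⊗ₜ[R] x) ⊗ₜ[K] ((1 : K) ⊗ₜ[R] y) := rfl
      have hmkx : ∀ z : A, fbar (π z) = πK ((1 : K) ⊗ₜ[R] z) := by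
        intro z
        have hz : π z = Ideal.Quotient.mk I z := rfl
        rw [hz, hfbar_mk]
        simp [hπK, hφ]
      rw [hD, TensorProduct.map_tmul, hgmap]
      simp only [LinearMap.coe_comp, Function.comp_apply, LinearMap.coe_restrictScalars,
        LinearEquiv.coe_toLinearMap, LinearMap.lTensor_tmul, TensorProduct.comm_tmul,
        AlgHom.toLinearMap_apply]
      rw [he₂, TensorProduct.AlgebraTensorModule.cancelBaseChange_symm_tmul
        (R := R) (A := K) K]
      rw [LinearMap.lTensor_tmul, hf'_tmul, one_smul]
      simp only [hΨdef, LinearMap.coe_comp, Function.comp_apply,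
        LinearEquiv.coe_toLinearMap, TensorProduct.comm_tmul, TensorProduct.map_tmul,
        AlgHom.toLinearMap_apply]
      rw [hmkx x, hmkx y]
    | add x y hx hy =>
      simp only [map_add, TensorProduct.tmul_add]
      rw [hx, hy]
  -- put everything together
  have hη := (hmemI a).mp ha
  have hc := hcomul _ hη
  have h0 : gmap ((TensorProduct.map π π) (Coalgebra.comul (R := R) (A := A) a)) = 0 := by
    rw [hcompat]
    have hbc : LinearMap.baseChange K (Coalgebra.comul (R := R) (A := A))
        ((1 : K) ⊗ₜ[R] a) = (1 : K) ⊗ₜ[R] (Coalgebra.comul (R := R) (A := A) a) :=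
      LinearMap.baseChange_tmul _ _ _
    rw [← hbc]
    exact hΨzero _ hc
  have hmemker : Coalgebra.comul (R := R) (A := A) a ∈
      LinearMap.ker (TensorProduct.map π π) := by
    rw [LinearMap.mem_ker]
    exact hgmap_inj (by rw [h0, map_zero])
  rw [hker] at hmemker
  have hr1 : LinearMap.range (LinearMap.lTensor A
        (Submodule.restrictScalars R I).subtype) ≤
      Submodule.span R {z : A ⊗[R] A | ∃ v : A, ∃ u ∈ I, z = v ⊗ₜ[R] u} := by
    rw [show LinearMap.lTensor A (Submodule.restrictScalars R I).subtype =
      TensorProduct.map LinearMap.id (Submodule.restrictScalars R I).subtype from rfl]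
    rw [TensorProduct.range_map_eq_span_tmul]
    apply Submodule.span_mono
    rintro _ ⟨m, n, rfl⟩
    exact ⟨m, n, n.2, rfl⟩
  have hr2 : LinearMap.range (LinearMap.rTensor A
        (Submodule.restrictScalars R I).subtype) ≤
      Submodule.span R {z : A ⊗[R] A | ∃ u ∈ I, ∃ v : A, z = u ⊗ₜ[R] v} := by
    rw [show LinearMap.rTensor A (Submodule.restrictScalars R I).subtype =
      TensorProduct.map (Submodule.restrictScalars R I).subtype LinearMap.id from rfl]
    rw [TensorProduct.range_map_eq_span_tmul]
    apply Submodule.span_mono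
    rintro _ ⟨m, n, rfl⟩
    exact ⟨m, m.2, n, rfl⟩
  have hfinal := sup_le_sup hr1 hr2 hmemker
  rwa [sup_comm] at hfinal


/-- Let `R` be a Dedekind domain with fraction field `K`, `A` a finite flat
commutative `R`-Hopf algebra, and `I_η ⊆ A_K := K ⊗[R] A` a Hopf ideal (stable under the
base-changed comultiplication, with zero counit and stable under the antipode).  Then
`I := A ∩ I_η` (the preimage of `I_η` under `A → K ⊗[R] A`) is a Hopf ideal of `A`, and the
quotient `A ⧸ I` is `R`-flat; consequently the scheme-theoretic closure of a closed
`K`-subgroup scheme of the generic fiber of a finite flat `R`-group scheme is a flat closed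
`R`-subgroup scheme. -/
theorem closure_of_hopf_ideal_is_hopf_ideal
    (R K A : Type*) [CommRing R] [IsDomain R] [IsDedekindDomain R]
    [Field K] [Algebra R K] [IsFractionRing R K]
    [CommRing A] [HopfAlgebra R A] [Module.Finite R A] [Module.Flat R A]
    (Iη : Ideal (K ⊗[R] A))
    -- `Δ(I_η) ⊆ I_η ⊗ A_K + A_K ⊗ I_η`:
    (hcomul : ∀ x ∈ Iη,
      (TensorProduct.AlgebraTensorModule.distribBaseChange (R := R) (A := K)
            (N := A) (Q := A)).toLinearMap
          (LinearMap.baseChange K (Coalgebra.comul (R := R) (A := A)) x) ∈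
        Submodule.span K {z : (K ⊗[R] A) ⊗[K] (K ⊗[R] A) |
            ∃ u ∈ Iη, ∃ v : K ⊗[R] A, z = u ⊗ₜ[K] v} ⊔
        Submodule.span K {z : (K ⊗[R] A) ⊗[K] (K ⊗[R] A) |
            ∃ v : K ⊗[R] A, ∃ u ∈ Iη, z = v ⊗ₜ[K] u})
    -- `ε(I_η) = 0`:
    (hcounit : ∀ x ∈ Iη,
      LinearMap.baseChange K (Coalgebra.counit (R := R) (A := A)) x = 0)
    -- `S(I_η) ⊆ I_η`:
    (hantipode : ∀ x ∈ Iη,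
      LinearMap.baseChange K (HopfAlgebra.antipode (R := R) (A := A)) x ∈ Iη) :
    -- conclusion: `I = A ∩ I_η` is a Hopf ideal of `A`, with `R`-flat quotient:
    (∀ a ∈ Iη.comap (Algebra.TensorProduct.includeRight (R := R) (A := K) (B := A)).toRingHom,
      Coalgebra.comul (R := R) (A := A) a ∈
        Submodule.span R {z : A ⊗[R] A |
            ∃ u ∈ Iη.comap
                (Algebra.TensorProduct.includeRight (R := R) (A := K) (B := A)).toRingHom,
              ∃ v : A, z = u ⊗ₜ[R] v} ⊔
        Submodule.span R {z : A ⊗[R] A |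
            ∃ v : A, ∃ u ∈ Iη.comap
                (Algebra.TensorProduct.includeRight (R := R) (A := K) (B := A)).toRingHom,
              z = v ⊗ₜ[R] u}) ∧
    (∀ a ∈ Iη.comap (Algebra.TensorProduct.includeRight (R := R) (A := K) (B := A)).toRingHom,
      Coalgebra.counit (R := R) (A := A) a = 0) ∧
    (∀ a ∈ Iη.comap (Algebra.TensorProduct.includeRight (R := R) (A := K) (B := A)).toRingHom,
      HopfAlgebra.antipode (R := R) (A := A) a ∈
        Iη.comap (Algebra.TensorProduct.includeRight (R := R) (A := K) (B := A)).toRingHom) ∧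
    Module.Flat R
      (A ⧸ Iη.comap
        (Algebra.TensorProduct.includeRight (R := R) (A := K) (B := A)).toRingHom) := by
  set φ := Algebra.TensorProduct.includeRight (R := R) (A := K) (B := A) with hφ
  set I : Ideal A := Iη.comap φ.toRingHom with hIdef
  have hmemI : ∀ a : A, a ∈ I ↔ (1 : K) ⊗ₜ[R] a ∈ Iη := by
    intro a
    rw [hIdef, Ideal.mem_comap]
    constructor <;> intro h <;> simpa [hφ] using h
  -- the quotients
  have hginj : Function.Injective (algebraMap R K) := IsFractionRing.injective R K
  set QK := (K ⊗[R] A) ⧸ Iη with hQK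
  set πK := Ideal.Quotient.mkₐ K Iη with hπK
  -- the induced injection on quotients
  have hzero : ∀ a ∈ I, (((Ideal.Quotient.mkₐ K Iη).restrictScalars R).comp φ) a = 0 := by
    intro a ha
    have : φ a ∈ Iη := by simpa [hφ] using ((hmemI a).mp ha)
    simpa using Ideal.Quotient.eq_zero_iff_mem.mpr this
  set fbar : (A ⧸ I) →ₐ[R] QK :=
    Ideal.Quotient.liftₐ I (((Ideal.Quotient.mkₐ K Iη).restrictScalars R).comp φ) hzero
    with hfbar
  have hfbar_mk : ∀ a : A, fbar (Ideal.Quotient.mk I a) = Ideal.Quotient.mk Iη (φ a) := by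
    intro a
    rw [hfbar, Ideal.Quotient.liftₐ_apply]
    rfl
  have hfbar_inj : Function.Injective fbar := by
    rw [injective_iff_map_eq_zero]
    intro x hx
    obtain ⟨a, rfl⟩ := Ideal.Quotient.mk_surjective x
    rw [hfbar_mk] at hx
    rw [Ideal.Quotient.eq_zero_iff_mem] at hx ⊢
    rw [hIdef, Ideal.mem_comap]
    exact hx
  -- flatness of the quotient
  have hflatQ : Module.Flat R (A ⧸ I) :=
    aux_flat_of_inj R K (A ⧸ I) QK fbar.toLinearMap hfbar_inj
  refine ⟨?_, ?_, ?_, hflatQ⟩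
  · exact fun a ha => aux_comul_mem R K A Iη hcomul a ha
  · -- counit
    intro a ha
    have h := hcounit _ ((hmemI a).mp ha)
    rw [LinearMap.baseChange_tmul] at h
    have h2 := congrArg (LinearMap.liftBaseChange K (Algebra.linearMap R K)) h
    simp only [map_zero, LinearMap.liftBaseChange_tmul, one_smul,
      Algebra.linearMap_apply] at h2
    exact hginj (by rw [h2, map_zero])
  · -- antipode
    intro a ha
    have h := hantipode _ ((hmemI a).mp ha)
    rw [LinearMap.baseChange_tmul] at h
    exact (hmemI _).mpr h
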